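/- Let 1 ≤ u ≤ r and let T be a set of (unsigned) patterns in S_k. Then the number of signed permutations in E_n^r avoiding the homogeneous signed pattern set T_(u) (each pattern of T with all signs equal to u) is given by |E_n^r(T_(u))| = Σ_{j=0}^n j! (r−1)^j |S_{n−j}(T)| C(n,j)^2, where S_m(T) is the set of T-avoiding permutations in S_m. -/

import Mathlib

open Finset Equiv

/-- A signed permutation of length `n` with `r` signs: a permutation of `Fin n`
together with a sign in `Fin r` attached to each position. -/
abbrev SignedPerm (n r : ℕ) := Equiv.Perm (Fin n) × (Fin n → Fin r)

/-- `SPContains p x` : the signed permutation `x` contains the signed pattern `p`,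
i.e. there is an increasing sequence of positions on which the symbols of `x` are
order-isomorphic to the symbols of `p` and the signs match exactly. -/
def SPContains {k n r : ℕ} (p : SignedPerm k r) (x : SignedPerm n r) : Prop :=
  ∃ f : Fin k → Fin n, StrictMono f ∧
    (∀ i j : Fin k, p.1 i < p.1 j ↔ x.1 (f i) < x.1 (f j)) ∧
    (∀ i : Fin k, x.2 (f i) = p.2 i)

/-- Classical (unsigned) pattern containment for permutations. -/
def PContains {k m : ℕ} (τ : Equiv.Perm (Fin k)) (σ : Equiv.Perm (Fin m)) : Prop :=
  ∃ f : Fin k → Fin m, StrictMono f ∧ ∀ i j : Fin k, τ i < τ j ↔ σ (f i) < σ (f j)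

/-- for a set `T ⊆ S_k` of unsigned patterns and a sign `u`,
`|E_n^r(T_(u))| = Σ_{j=0}^n j! (r-1)^j |S_{n-j}(T)| C(n,j)^2`. -/

lemma perm_eq_of_lt_iff {m : ℕ} (f g : Equiv.Perm (Fin m))
    (h : ∀ i j, f i < f j ↔ g i < g j) : f = g := by
  haveI : WellFoundedLT (Fin m) := inferInstance
  have h1 : StrictMono (fun i => g (f.symm i)) := fun i j hij =>
    (h (f.symm i) (f.symm j)).mp (by simpa using hij)
  have h2 : StrictMono (fun i => f (g.symm i)) := fun i j hij =>
    (h (g.symm i) (g.symm j)).mpr (by simpa using hij)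
  have key : ∀ i, g (f.symm i) = i := by
    intro i
    refine le_antisymm ?_ h1.le_apply
    have a2 : i ≤ f (g.symm i) := h2.le_apply
    have := h1.monotone a2
    simpa using this
  ext x
  have hx := key (f x)
  rw [Equiv.symm_apply_apply] at hx
  exact congrArg Fin.val hx.symm

noncomputable def patt {n : ℕ} (S : Finset (Fin n)) (π : Equiv.Perm (Fin n)) :
    Equiv.Perm (Fin S.card) :=
  Equiv.ofBijective
    (fun i => ((S.image ⇑π).orderIsoOfFin
        (Finset.card_image_of_injective S π.injective)).symm
      ⟨π (S.orderIsoOfFin rfl i), Finset.mem_image_of_mem ⇑π (S.orderIsoOfFin rfl i).2⟩)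
    (Finite.injective_iff_bijective.mp (by
      intro i j hij
      have := congrArg ((S.image ⇑π).orderIsoOfFin
        (Finset.card_image_of_injective S π.injective)) hij
      simp only [OrderIso.apply_symm_apply, Subtype.mk.injEq] at this
      have := π.injective this
      have := Subtype.ext this
      exact (S.orderIsoOfFin rfl).injective this))

lemma patt_lt {n : ℕ} (S : Finset (Fin n)) (π : Equiv.Perm (Fin n)) (i j : Fin S.card) :
    patt S π i < patt S π j ↔ π (S.orderIsoOfFin rfl i) < π (S.orderIsoOfFin rfl j) := by
  show ((S.image ⇑π).orderIsoOfFin (Finset.card_image_of_injective S π.injective)).symm _ < ((S.image ⇑π).orderIsoOfFin (Finset.card_image_of_injective S π.injective)).symm _ ↔ _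
  rw [OrderIso.lt_iff_lt]
  exact Subtype.mk_lt_mk

lemma patt_unique {n : ℕ} (S : Finset (Fin n)) (π : Equiv.Perm (Fin n))
    (σ : Equiv.Perm (Fin S.card))
    (h : ∀ i j, σ i < σ j ↔ π (S.orderIsoOfFin rfl i) < π (S.orderIsoOfFin rfl j)) :
    σ = patt S π :=
  perm_eq_of_lt_iff _ _ (fun i j => (h i j).trans (patt_lt S π i j).symm)

lemma spc_iff {n r k : ℕ} (π : Equiv.Perm (Fin n)) (a : Fin n → Fin r) (u : Fin r)
    (τ : Equiv.Perm (Fin k)) :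
    SPContains (τ, fun _ => u) (π, a) ↔
      PContains τ (patt (Finset.univ.filter fun i => a i = u) π) := by
  set S := Finset.univ.filter fun i => a i = u with hS
  constructor
  · rintro ⟨f, hmono, hord, hsign⟩
    have hf : ∀ i, f i ∈ S := fun i => by
      simp only [hS, Finset.mem_filter, Finset.mem_univ, true_and]
      exact hsign i
    refine ⟨fun i => (S.orderIsoOfFin rfl).symm ⟨f i, hf i⟩, ?_, ?_⟩
    · intro i j hij
      exact (S.orderIsoOfFin rfl).symm.lt_iff_lt.mpr (Subtype.mk_lt_mk.mpr (hmono hij))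
    · intro i j
      rw [patt_lt]
      simp only [OrderIso.apply_symm_apply]
      exact hord i j
  · rintro ⟨g, hmono, hord⟩
    refine ⟨fun i => ((S.orderIsoOfFin rfl) (g i) : Fin n), ?_, ?_, ?_⟩
    · intro i j hij
      have h1 : (S.orderIsoOfFin rfl) (g i) < (S.orderIsoOfFin rfl) (g j) :=
        (S.orderIsoOfFin rfl).lt_iff_lt.mpr (hmono hij)
      exact h1
    · intro i j
      simpa using (hord i j).trans (patt_lt S π (g i) (g j))
    · intro i
      have := ((S.orderIsoOfFin rfl) (g i)).2
      simp only [hS, Finset.mem_filter, Finset.mem_univ, true_and] at this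
      exact this

lemma patt_enum' {n : ℕ} (A W : Finset (Fin n)) (π : Equiv.Perm (Fin n))
    (hW : A.image ⇑π = W) (h : W.card = A.card) :
    (fun i => π (A.orderIsoOfFin rfl ((patt A π).symm i))) = ⇑(W.orderEmbOfFin h) := by
  apply Finset.orderEmbOfFin_unique
  · intro i
    rw [← hW]
    exact Finset.mem_image_of_mem _ (A.orderIsoOfFin rfl ((patt A π).symm i)).2
  · intro i j hij
    rw [← patt_lt]
    simpa using hij

lemma eq_on_of_patt_eq {n : ℕ} (A : Finset (Fin n)) (π₁ π₂ : Equiv.Perm (Fin n))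
    (hW : A.image ⇑π₁ = A.image ⇑π₂) (hp : patt A π₁ = patt A π₂) :
    ∀ x ∈ A, π₁ x = π₂ x := by
  intro x hx
  have h1 : (A.image ⇑π₁).card = A.card := Finset.card_image_of_injective A π₁.injective
  have e1 := patt_enum' A (A.image ⇑π₁) π₁ rfl h1
  have e2 := patt_enum' A (A.image ⇑π₁) π₂ hW.symm h1
  have e3 := e1.trans e2.symm
  have := congrFun e3 (patt A π₁ ((A.orderIsoOfFin rfl).symm ⟨x, hx⟩))
  rw [hp] at this
  simp only [Equiv.symm_apply_apply, OrderIso.apply_symm_apply] at this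
  exact this

lemma cardA {n : ℕ} (S : Finset (Fin n)) (P : Equiv.Perm (Fin S.card) → Prop) :
    Nat.card {π : Equiv.Perm (Fin n) // P (patt S π)} =
      n.choose S.card * Nat.card {σ : Equiv.Perm (Fin S.card) // P σ}
        * (n - S.card).factorial := by
  classical
  have hm : S.card ≤ n := by
    simpa using Finset.card_le_univ S
  have hjc : Sᶜ.card = n - S.card := by
    simp [Finset.card_compl]
  let F : Equiv.Perm (Fin n) →
      ({W : Finset (Fin n) // W.card = S.card} × Equiv.Perm (Fin S.card)
        × Equiv.Perm (Fin Sᶜ.card)) :=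
    fun π => (⟨S.image ⇑π, Finset.card_image_of_injective S π.injective⟩,
      patt S π, patt Sᶜ π)
  have hinj : Function.Injective F := by
    intro π₁ π₂ h
    have hW : S.image ⇑π₁ = S.image ⇑π₂ := congrArg (fun t => (t.1 : Finset (Fin n))) h
    have hp : patt S π₁ = patt S π₂ := congrArg (fun t => t.2.1) h
    have hq : patt Sᶜ π₁ = patt Sᶜ π₂ := congrArg (fun t => t.2.2) h
    have himg : ∀ (π : Equiv.Perm (Fin n)), Sᶜ.image ⇑π = (S.image ⇑π)ᶜ := by
      intro π
      ext x
      simp only [Finset.mem_image, Finset.mem_compl]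
      constructor
      · rintro ⟨y, hy, rfl⟩ ⟨z, hz, hzy⟩
        exact hy (π.injective hzy ▸ hz)
      · intro h
        exact ⟨π.symm x, fun hs => h ⟨π.symm x, hs, π.apply_symm_apply x⟩,
          π.apply_symm_apply x⟩
    have hWc : Sᶜ.image ⇑π₁ = Sᶜ.image ⇑π₂ := by
      rw [himg π₁, himg π₂, hW]
    ext x
    by_cases hx : x ∈ S
    · exact congrArg Fin.val (eq_on_of_patt_eq S π₁ π₂ hW hp x hx)
    · exact congrArg Fin.val (eq_on_of_patt_eq Sᶜ π₁ π₂ hWc hq x (Finset.mem_compl.mpr hx))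
  have hbij : Function.Bijective F := by
    rw [Fintype.bijective_iff_injective_and_card]
    refine ⟨hinj, ?_⟩
    simp only [Fintype.card_prod, Fintype.card_perm, Fintype.card_fin,
      Fintype.card_finset_len, Fintype.card_fin, hjc]
    rw [← Nat.choose_mul_factorial_mul_factorial hm]
    ring
  have E : {π : Equiv.Perm (Fin n) // P (patt S π)} ≃
      {t : ({W : Finset (Fin n) // W.card = S.card} × Equiv.Perm (Fin S.card)
        × Equiv.Perm (Fin Sᶜ.card)) // P t.2.1} :=
    (Equiv.ofBijective F hbij).subtypeEquiv (fun π => Iff.rfl)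
  have E2 : {t : ({W : Finset (Fin n) // W.card = S.card} × Equiv.Perm (Fin S.card)
        × Equiv.Perm (Fin Sᶜ.card)) // P t.2.1} ≃
      ({W : Finset (Fin n) // W.card = S.card} ×
        {σ : Equiv.Perm (Fin S.card) // P σ} × Equiv.Perm (Fin Sᶜ.card)) :=
    ⟨fun t => (t.1.1, ⟨t.1.2.1, t.2⟩, t.1.2.2),
     fun s => ⟨(s.1, s.2.1.1, s.2.2), s.2.1.2⟩,
     fun t => rfl, fun s => rfl⟩
  rw [Nat.card_congr (E.trans E2), Nat.card_prod, Nat.card_prod,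
    Nat.card_eq_fintype_card (α := {W : Finset (Fin n) // W.card = S.card}),
    Nat.card_eq_fintype_card (α := Equiv.Perm (Fin Sᶜ.card)),
    Fintype.card_finset_len, Fintype.card_fin, Fintype.card_perm, Fintype.card_fin, hjc]
  ring

lemma fiberCard {n r : ℕ} (u : Fin r) (S : Finset (Fin n)) :
    Nat.card {a : Fin n → Fin r // Finset.univ.filter (fun i => a i = u) = S} =
      (r - 1) ^ (n - S.card) := by
  classical
  have E : {a : Fin n → Fin r // Finset.univ.filter (fun i => a i = u) = S} ≃
      ({i : Fin n // i ∉ S} → {v : Fin r // v ≠ u}) := by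
    refine ⟨fun a i => ⟨a.1 i.1, fun h => i.2 ?_⟩,
      fun b => ⟨fun i => if h : i ∈ S then u else (b ⟨i, h⟩).1, ?_⟩, ?_, ?_⟩
    · have hmem : (i : Fin n) ∈ Finset.univ.filter (fun j => a.1 j = u) := by simp [h]
      rw [a.2] at hmem
      exact hmem
    · ext i
      simp only [Finset.mem_filter, Finset.mem_univ, true_and]
      by_cases h : i ∈ S
      · simp [h]
      · simp only [h, dif_neg, iff_false]
        exact (b ⟨i, h⟩).2
    · intro a
      apply Subtype.ext
      funext i
      by_cases h : i ∈ S
      · simp only [dif_pos h]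
        have := a.2
        rw [← this] at h
        simp only [Finset.mem_filter] at h
        exact h.2.symm
      · simp [dif_neg h]
    · intro b
      funext i
      apply Subtype.ext
      simp [dif_neg i.2]
  rw [Nat.card_congr E, Nat.card_fun]
  congr 1
  · rw [Nat.card_eq_fintype_card, Fintype.card_subtype_compl,
      Fintype.card_subtype_eq, Fintype.card_fin]
  · rw [Nat.card_eq_fintype_card, Fintype.card_subtype_compl, Fintype.card_fin]
    congr 1
    exact Fintype.card_coe S

lemma natCard_sigma {ι : Type*} [Fintype ι] (f : ι → Type*) [∀ i, Finite (f i)] :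
    Nat.card (Σ i, f i) = ∑ i, Nat.card (f i) := by
  have : ∀ i, Fintype (f i) := fun i => Fintype.ofFinite _
  simp [Nat.card_eq_fintype_card]

noncomputable def gg (n k : ℕ) (T : Set (Equiv.Perm (Fin k))) (m : ℕ) : ℕ :=
  n.choose m * Nat.card {σ : Equiv.Perm (Fin m) // ∀ τ ∈ T, ¬ PContains τ σ}
    * (n - m).factorial

theorem card_avoid_homogeneous (n r k : ℕ) (u : Fin r) (T : Set (Equiv.Perm (Fin k))) :
    Nat.card {x : SignedPerm n r // ∀ τ ∈ T, ¬ SPContains (τ, fun _ => u) x} =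
    ∑ j ∈ Finset.range (n + 1),
      j.factorial * (r - 1) ^ j *
        Nat.card {σ : Equiv.Perm (Fin (n - j)) // ∀ τ ∈ T, ¬ PContains τ σ} *
        (n.choose j) ^ 2 := by
  classical
  have E1 : {x : SignedPerm n r // ∀ τ ∈ T, ¬ SPContains (τ, fun _ => u) x} ≃
      Σ a : Fin n → Fin r, {π : Equiv.Perm (Fin n) // ∀ τ ∈ T,
        ¬ PContains τ (patt (Finset.univ.filter fun i => a i = u) π)} := by
    refine ⟨fun x => ⟨x.1.2, ⟨x.1.1,
        fun τ hτ hc => x.2 τ hτ ((spc_iff x.1.1 x.1.2 u τ).mpr hc)⟩⟩,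
      fun s => ⟨(s.2.1, s.1),
        fun τ hτ hc => s.2.2 τ hτ ((spc_iff s.2.1 s.1 u τ).mp hc)⟩, ?_, ?_⟩
    · intro x; rfl
    · intro s; rfl
  rw [Nat.card_congr E1, natCard_sigma]
  have step2 : ∀ a : Fin n → Fin r,
      Nat.card {π : Equiv.Perm (Fin n) // ∀ τ ∈ T,
        ¬ PContains τ (patt (Finset.univ.filter fun i => a i = u) π)} =
      gg n k T (Finset.univ.filter fun i => a i = u).card := by
    intro a
    rw [gg]
    exact cardA (Finset.univ.filter fun i => a i = u) (fun σ => ∀ τ ∈ T, ¬ PContains τ σ)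
  rw [Finset.sum_congr rfl fun a _ => step2 a]
  rw [← Finset.sum_fiberwise Finset.univ
    (fun a : Fin n → Fin r => Finset.univ.filter fun i => a i = u)
    (fun a => gg n k T (Finset.univ.filter fun i => a i = u).card)]
  have step3 : ∀ S : Finset (Fin n),
      (∑ a ∈ Finset.univ.filter
        (fun a : Fin n → Fin r => (Finset.univ.filter fun i => a i = u) = S),
        gg n k T (Finset.univ.filter fun i => a i = u).card) =
      (r - 1) ^ (n - S.card) * gg n k T S.card := by
    intro S
    have h1 : ∀ a ∈ Finset.univ.filter
        (fun a : Fin n → Fin r => (Finset.univ.filter fun i => a i = u) = S),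
        gg n k T (Finset.univ.filter fun i => a i = u).card = gg n k T S.card := by
      intro a ha
      rw [(Finset.mem_filter.mp ha).2]
    rw [Finset.sum_congr rfl h1, Finset.sum_const, smul_eq_mul]
    congr 1
    rw [← Fintype.card_subtype, ← Nat.card_eq_fintype_card]
    exact fiberCard u S
  rw [Finset.sum_congr rfl fun S _ => step3 S]
  rw [← Finset.powerset_univ,
    Finset.sum_powerset_apply_card (fun m => (r - 1) ^ (n - m) * gg n k T m)]
  simp only [Finset.card_univ, Fintype.card_fin, smul_eq_mul]
  rw [← Finset.sum_range_reflect]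
  refine Finset.sum_congr rfl fun j hj => ?_
  have hjn : j ≤ n := Nat.lt_succ_iff.mp (Finset.mem_range.mp hj)
  have h1 : n + 1 - 1 - j = n - j := by omega
  rw [h1, gg, Nat.choose_symm hjn, Nat.sub_sub_self hjn]
  ring
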